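/- Let σ > 0 and let v_1, …, v_M ∈ ℝⁿ with ‖v_m‖ ≤ 1 for all m. Define positive definite matrices by Σ_0 = I and Σ_{m}⁻¹ = Σ_{m-1}⁻¹ + (1/σ²) v_m v_mᵀ, and set κ_m = √(v_mᵀ Σ_{m-1} v_m). Then Σ_{m=1}^{M} κ_m ≤ √( M · n · ln(1 + M/(n σ²)) / ln(1 + 1/σ²) ). -/

import Mathlib

open Matrix Finset

section Aux

variable {n : ℕ}

lemma myVecMulVec_mulVec (v x : Fin n → ℝ) :
    vecMulVec v v *ᵥ x = (v ⬝ᵥ x) • v := by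
  ext i
  simp only [mulVec, dotProduct, vecMulVec_apply, Pi.smul_apply, smul_eq_mul, Finset.sum_mul]
  exact Finset.sum_congr rfl fun j _ => by ring

lemma mySmul_vecMulVec_posSemidef {c : ℝ} (hc : 0 ≤ c) (v : Fin n → ℝ) :
    (c • vecMulVec v v).PosSemidef := by
  refine PosSemidef.of_dotProduct_mulVec_nonneg ?_ fun x => ?_
  · ext i j
    simp [conjTranspose_apply, vecMulVec_apply, mul_comm]
  · rw [star_trivial, smul_mulVec, myVecMulVec_mulVec, dotProduct_smul, smul_eq_mul,
      dotProduct_smul, smul_eq_mul, dotProduct_comm x v]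
    exact mul_nonneg hc (mul_self_nonneg _)

lemma myQuad_nonneg {A : Matrix (Fin n) (Fin n) ℝ} (hA : A.PosDef) (v : Fin n → ℝ) :
    0 ≤ v ⬝ᵥ (A⁻¹ *ᵥ v) := by
  simpa using hA.inv.posSemidef.dotProduct_mulVec_nonneg v

lemma myQuad_le_one {A : Matrix (Fin n) (Fin n) ℝ} (hA : A.PosDef) (h1 : (A - 1).PosSemidef)
    {v : Fin n → ℝ} (hv : v ⬝ᵥ v ≤ 1) : v ⬝ᵥ (A⁻¹ *ᵥ v) ≤ 1 := by
  set w := A⁻¹ *ᵥ v with hw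
  have hAw : A *ᵥ w = v := by
    rw [hw, mulVec_mulVec, Matrix.mul_nonsing_inv _ (isUnit_iff_ne_zero.mpr hA.det_pos.ne'),
      one_mulVec]
  have hww : w ⬝ᵥ w ≤ v ⬝ᵥ w := by
    have h := h1.dotProduct_mulVec_nonneg w
    rw [star_trivial, sub_mulVec, one_mulVec, dotProduct_sub, hAw, dotProduct_comm w v] at h
    linarith
  have hcs : (v ⬝ᵥ w) ^ 2 ≤ (v ⬝ᵥ v) * (w ⬝ᵥ w) := by
    simpa [dotProduct, sq] using Finset.sum_mul_sq_le_sq_mul_sq Finset.univ v w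
  have h0 : 0 ≤ v ⬝ᵥ w := myQuad_nonneg hA v
  have hww0 : 0 ≤ w ⬝ᵥ w := by
    simpa [dotProduct] using Finset.sum_nonneg fun i _ => mul_self_nonneg (w i)
  have hvv0 : 0 ≤ v ⬝ᵥ v := by
    simpa [dotProduct] using Finset.sum_nonneg fun i _ => mul_self_nonneg (v i)
  nlinarith

lemma myDet_step {A : Matrix (Fin n) (Fin n) ℝ} (hA : A.PosDef) (c : ℝ) (v : Fin n → ℝ) :
    (A + c • vecMulVec v v).det = A.det * (1 + c * (v ⬝ᵥ (A⁻¹ *ᵥ v))) := by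
  have hA' : IsUnit A.det := isUnit_iff_ne_zero.mpr hA.det_pos.ne'
  have hv : c • vecMulVec v v = replicateCol Unit (c • v) * replicateRow Unit v := by
    rw [← vecMulVec_eq]
    ext i j
    simp [vecMulVec_apply]
    ring
  rw [hv, det_add_replicateCol_mul_replicateRow hA']
  congr 1
  have hcol : A⁻¹ * replicateCol Unit (c • v) = replicateCol Unit (A⁻¹ *ᵥ (c • v)) := by
    ext i j
    simp [mulVec, replicateCol_apply, mul_apply, dotProduct]
  rw [det_unique, Matrix.add_apply, Matrix.one_apply_eq, Matrix.mul_assoc, hcol,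
    replicateRow_mul_replicateCol_apply, mulVec_smul, dotProduct_smul, smul_eq_mul]

lemma myTrace_eq_sum_eig {A : Matrix (Fin n) (Fin n) ℝ} (hA : A.IsHermitian) :
    A.trace = ∑ i, hA.eigenvalues i := by
  rw [hA.trace_eq_sum_eigenvalues]
  simp

lemma myDet_le_pow_trace {A : Matrix (Fin n) (Fin n) ℝ} (hn : 0 < n) (hA : A.PosDef) :
    A.det ≤ (A.trace / n) ^ n := by
  have hher := hA.isHermitian
  have heig : ∀ i, 0 ≤ hher.eigenvalues i := fun i => hA.posSemidef.eigenvalues_nonneg i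
  have hn' : (n : ℝ) ≠ 0 := Nat.cast_ne_zero.mpr hn.ne'
  have hgm := Real.geom_mean_le_arith_mean_weighted Finset.univ (fun _ => (n : ℝ)⁻¹)
      hher.eigenvalues (fun _ _ => by positivity)
      (by simp [Finset.card_univ, hn']) (fun i _ => heig i)
  have htr : ∑ i, (n : ℝ)⁻¹ * hher.eigenvalues i = A.trace / n := by
    rw [← Finset.mul_sum, ← myTrace_eq_sum_eig hher]
    ring
  have hdet : A.det = ∏ i, hher.eigenvalues i := by
    rw [hher.det_eq_prod_eigenvalues]
    norm_num
  have hpow := pow_le_pow_left₀ (Finset.prod_nonneg fun i _ => Real.rpow_nonneg (heig i) _)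
      (htr ▸ hgm) n
  calc A.det = (∏ i, hher.eigenvalues i ^ ((n : ℝ)⁻¹)) ^ n := by
        rw [← Finset.prod_pow]
        rw [hdet]
        refine Finset.prod_congr rfl fun i _ => ?_
        rw [← Real.rpow_natCast (hher.eigenvalues i ^ ((n:ℝ)⁻¹)) n, ← Real.rpow_mul (heig i),
          inv_mul_cancel₀ hn', Real.rpow_one]
    _ ≤ (A.trace / n) ^ n := hpow

lemma myMul_log_le {c b : ℝ} (hc : 0 < c) (hb0 : 0 ≤ b) (hb1 : b ≤ 1) :
    b * Real.log (1 + c) ≤ Real.log (1 + c * b) := by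
  have h1 : (0 : ℝ) < 1 + c := by linarith
  have h2 : (1 + c) ^ b ≤ 1 + b * c :=
    rpow_one_add_le_one_add_mul_self (by linarith) hb0 hb1
  calc b * Real.log (1 + c) = Real.log ((1 + c) ^ b) := (Real.log_rpow h1 b).symm
    _ ≤ Real.log (1 + b * c) := Real.log_le_log (by positivity) h2
    _ = Real.log (1 + c * b) := by rw [mul_comm b c]

end Aux

/-- Key confidence-width summation bound: with `Σ₀⁻¹ = I`,
`Σ_m⁻¹ = Σ_{m-1}⁻¹ + (1/σ²) v_m v_mᵀ`, `‖v_m‖ ≤ 1`, and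
`κ_m = √(v_mᵀ Σ_{m-1} v_m)`, one has
`Σ_{m} κ_m ≤ √(M n ln(1 + M/(n σ²)) / ln(1 + 1/σ²))`. -/
theorem sum_confidence_widths_bound {n : ℕ} (hn : 0 < n) (σ : ℝ) (hσ : 0 < σ)
    (M : ℕ) (v : ℕ → (Fin n → ℝ))
    (hv : ∀ m, Real.sqrt (∑ i, (v m i) ^ 2) ≤ 1)
    (Sinv : ℕ → Matrix (Fin n) (Fin n) ℝ)
    (h0 : Sinv 0 = 1)
    (hrec : ∀ m, Sinv (m + 1) = Sinv m + (σ ^ 2)⁻¹ • vecMulVec (v m) (v m)) :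
    ∑ m ∈ Finset.range M, Real.sqrt (v m ⬝ᵥ ((Sinv m)⁻¹ *ᵥ v m)) ≤
      Real.sqrt ((M : ℝ) * n * Real.log (1 + (M : ℝ) / (n * σ ^ 2)) /
        Real.log (1 + 1 / σ ^ 2)) := by
  have hσ2 : (0 : ℝ) < σ ^ 2 := by positivity
  set c : ℝ := (σ ^ 2)⁻¹ with hc
  have hc0 : 0 < c := by positivity
  have hn' : (n : ℝ) ≠ 0 := Nat.cast_ne_zero.mpr hn.ne'
  have hnpos : (0 : ℝ) < n := by exact_mod_cast hn
  -- norm bound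
  have hvle : ∀ m, v m ⬝ᵥ v m ≤ 1 := by
    intro m
    have h1 : (0 : ℝ) ≤ ∑ i, (v m i) ^ 2 := Finset.sum_nonneg fun i _ => sq_nonneg _
    have := Real.sqrt_le_sqrt (le_refl (∑ i, (v m i) ^ 2))
    have h2 : ∑ i, (v m i) ^ 2 ≤ 1 := by
      have := hv m
      nlinarith [Real.sq_sqrt h1, Real.sqrt_nonneg (∑ i, (v m i) ^ 2)]
    calc v m ⬝ᵥ v m = ∑ i, (v m i) ^ 2 := by
          simp [dotProduct, sq]
      _ ≤ 1 := h2
  -- positive definiteness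
  have hPD : ∀ m, (Sinv m).PosDef ∧ (Sinv m - 1).PosSemidef := by
    intro m
    induction m with
    | zero =>
      rw [h0]
      exact ⟨Matrix.PosDef.one, by simpa using Matrix.PosSemidef.zero⟩
    | succ m ih =>
      rw [hrec]
      have hps := mySmul_vecMulVec_posSemidef hc0.le (v m)
      refine ⟨ih.1.add_posSemidef hps, ?_⟩
      have heq : Sinv m + c • vecMulVec (v m) (v m) - 1
          = (Sinv m - 1) + c • vecMulVec (v m) (v m) := by abel
      rw [heq]
      exact ih.2.add hps
  set q : ℕ → ℝ := fun m => v m ⬝ᵥ ((Sinv m)⁻¹ *ᵥ v m) with hq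
  have hq0 : ∀ m, 0 ≤ q m := fun m => myQuad_nonneg (hPD m).1 (v m)
  have hq1 : ∀ m, q m ≤ 1 := fun m => myQuad_le_one (hPD m).1 (hPD m).2 (hvle m)
  -- determinant product
  have hdet : ∀ m, (Sinv m).det = ∏ k ∈ Finset.range m, (1 + c * q k) := by
    intro m
    induction m with
    | zero => simp [h0]
    | succ m ih =>
      rw [hrec, myDet_step (hPD m).1, ih, Finset.prod_range_succ]
  -- trace
  have htr : ∀ m, (Sinv m).trace = n + c * ∑ k ∈ Finset.range m, (v k ⬝ᵥ v k) := by
    intro m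
    induction m with
    | zero => simp [h0]
    | succ m ih =>
      rw [hrec, Matrix.trace_add, Matrix.trace_smul, ih, Finset.sum_range_succ]
      have : (vecMulVec (v m) (v m)).trace = v m ⬝ᵥ v m := by
        rw [vecMulVec_eq Unit, Matrix.trace_replicateCol_mul_replicateRow]
      rw [this]
      simp [smul_eq_mul]
      ring
  have htrle : (Sinv M).trace ≤ n + c * M := by
    rw [htr M]
    have : ∑ k ∈ Finset.range M, (v k ⬝ᵥ v k) ≤ M := by
      calc ∑ k ∈ Finset.range M, (v k ⬝ᵥ v k) ≤ ∑ k ∈ Finset.range M, (1 : ℝ) :=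
            Finset.sum_le_sum fun k _ => hvle k
        _ = M := by simp
    nlinarith
  -- AM-GM bound on det
  have hdetle : (Sinv M).det ≤ (1 + (M : ℝ) / (n * σ ^ 2)) ^ n := by
    have h1 := myDet_le_pow_trace hn (hPD M).1
    have h2 : (Sinv M).trace / n ≤ 1 + (M : ℝ) / (n * σ ^ 2) := by
      rw [div_le_iff₀ hnpos]
      have hσ' : σ ≠ 0 := hσ.ne'
      have : (1 + (M : ℝ) / (n * σ ^ 2)) * n = n + c * M := by
        rw [hc]
        field_simp
      rw [this]
      exact htrle
    have h3 : (0 : ℝ) ≤ (Sinv M).trace / n := by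
      rw [htr M]
      have : (0:ℝ) ≤ ∑ k ∈ Finset.range M, (v k ⬝ᵥ v k) := by
        refine Finset.sum_nonneg fun k _ => ?_
        simpa [dotProduct, sq] using Finset.sum_nonneg fun i (_ : i ∈ Finset.univ) =>
          mul_self_nonneg (v k i)
      positivity
    exact h1.trans (pow_le_pow_left₀ h3 h2 n)
  -- logs
  set L : ℝ := Real.log (1 + 1 / σ ^ 2) with hL
  have hLpos : 0 < L := Real.log_pos (by nlinarith [one_div_pos.mpr hσ2])
  have hlogdet : Real.log (Sinv M).det = ∑ k ∈ Finset.range M, Real.log (1 + c * q k) := by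
    rw [hdet M]
    rw [Real.log_prod]
    intro k _
    nlinarith [hq0 k, mul_nonneg hc0.le (hq0 k)]
  have hkey : ∑ k ∈ Finset.range M, q k ≤ (n : ℝ) * Real.log (1 + (M : ℝ) / (n * σ ^ 2)) / L := by
    rw [le_div_iff₀ hLpos]
    calc (∑ k ∈ Finset.range M, q k) * L = ∑ k ∈ Finset.range M, q k * Real.log (1 + c) := by
          rw [← Finset.sum_mul]
          congr 1
          rw [hL, hc, one_div]
      _ ≤ ∑ k ∈ Finset.range M, Real.log (1 + c * q k) :=
          Finset.sum_le_sum fun k _ => myMul_log_le hc0 (hq0 k) (hq1 k)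
      _ = Real.log (Sinv M).det := hlogdet.symm
      _ ≤ Real.log ((1 + (M : ℝ) / (n * σ ^ 2)) ^ n) :=
          Real.log_le_log (hPD M).1.det_pos hdetle
      _ = (n : ℝ) * Real.log (1 + (M : ℝ) / (n * σ ^ 2)) := by
          rw [Real.log_pow]
  -- Cauchy-Schwarz
  have hcs : (∑ m ∈ Finset.range M, Real.sqrt (q m)) ^ 2 ≤ (M : ℝ) * ∑ m ∈ Finset.range M, q m := by
    have := sq_sum_le_card_mul_sum_sq (s := Finset.range M) (f := fun m => Real.sqrt (q m))
    simpa [Real.sq_sqrt (hq0 _), Finset.card_range] using this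
  refine Real.le_sqrt_of_sq_le ?_
  calc (∑ m ∈ Finset.range M, Real.sqrt (q m)) ^ 2
      ≤ (M : ℝ) * ∑ m ∈ Finset.range M, q m := hcs
    _ ≤ (M : ℝ) * ((n : ℝ) * Real.log (1 + (M : ℝ) / (n * σ ^ 2)) / L) :=
        mul_le_mul_of_nonneg_left hkey (Nat.cast_nonneg M)
    _ = (M : ℝ) * n * Real.log (1 + (M : ℝ) / (n * σ ^ 2)) / L := by ring
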